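/- arXiv:2605.18981 — 2 statements merged into one kernel-verified Lean document; each statement's English description precedes it below -/
import Mathlib

section
/- With notation as above, if 𝓛_X, 𝓛_Z ⊆ 𝔽_q^n are 𝔽_q-subspaces with 𝓛_X ⊆ 𝓛_Z^⊥ (Euclidean orthogonality over 𝔽_q), then the 𝔽₂-subspaces L_X = D_𝓑(𝓛_X) and L_Z = D_{𝓑*}(𝓛_Z) of 𝔽₂^{ns} satisfy L_X ⊆ L_Z^⊥ with respect to the standard 𝔽₂ inner product. -/
/-- If 𝓛_X ⊆ 𝓛_Z^⊥ over 𝔽_q, then the mapped 𝔽₂-codes L_X = D_𝓑(𝓛_X) and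
L_Z = D_{𝓑*}(𝓛_Z) satisfy L_X ⊆ L_Z^⊥ for the standard 𝔽₂ inner product. -/
theorem mapped_codes_orthogonal {F : Type*} [Field F] [Fintype F]
    [Algebra (ZMod 2) F] (s n : ℕ) (hs : Fintype.card F = 2 ^ s)
    (B Bstar : Fin n → Module.Basis (Fin s) (ZMod 2) F)
    (hdual : ∀ (i : Fin n) (j k : Fin s),
      (∑ m ∈ Finset.range s, (B i j * Bstar i k) ^ (2 ^ m)) = if j = k then 1 else 0)
    (LX LZ : Submodule F (Fin n → F))
    (horth : ∀ v ∈ LX, ∀ w ∈ LZ, ∑ i : Fin n, v i * w i = 0) :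
    ∀ v ∈ LX, ∀ w ∈ LZ,
      (∑ i : Fin n, ∑ j : Fin s, (B i).repr (v i) j * (Bstar i).repr (w i) j) = 0 := by
  classical
  intro v hv w hw
  set A := algebraMap (ZMod 2) F with hA
  have h2 : (2 : F) = 0 := by
    have h0 : (2 : ZMod 2) = 0 := by decide
    calc (2 : F) = A 2 := (map_ofNat A 2).symm
      _ = A 0 := by rw [h0]
      _ = 0 := map_zero A
  haveI : CharP F 2 := ringChar.of_eq (CharP.ringChar_of_prime_eq_zero Nat.prime_two h2)
  let T : F →+ F :=
    { toFun := fun x => ∑ m ∈ Finset.range s, x ^ (2 ^ m)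
      map_zero' := Finset.sum_eq_zero (fun m _ => zero_pow (by positivity))
      map_add' := by
        intro x y
        simp only [add_pow_char_pow]
        exact Finset.sum_add_distrib }
  have hsq : ∀ a : ZMod 2, a ^ 2 = a := by decide
  have hpow : ∀ (a : ZMod 2) (m : ℕ), a ^ 2 ^ m = a := by
    intro a m
    induction m with
    | zero => simp
    | succ k ih => rw [pow_succ, pow_mul, ih, hsq]
  have Tsm : ∀ (a : ZMod 2) (x : F), T (A a * x) = A a * T x := by
    intro a x
    show (∑ m ∈ Finset.range s, (A a * x) ^ 2 ^ m) = A a * ∑ m ∈ Finset.range s, x ^ 2 ^ m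
    rw [Finset.mul_sum]
    refine Finset.sum_congr rfl fun m _ => ?_
    rw [mul_pow, ← map_pow, hpow]
  have key : ∀ i : Fin n,
      A (∑ j : Fin s, (B i).repr (v i) j * (Bstar i).repr (w i) j) = T (v i * w i) := by
    intro i
    conv_rhs => rw [← Module.Basis.sum_repr (B i) (v i), ← Module.Basis.sum_repr (Bstar i) (w i)]
    rw [Finset.sum_mul_sum]
    simp only [map_sum]
    have : ∀ j k : Fin s,
        T (((B i).repr (v i) j • B i j) * ((Bstar i).repr (w i) k • Bstar i k))
          = A ((B i).repr (v i) j) * A ((Bstar i).repr (w i) k)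
              * (if j = k then 1 else 0) := by
      intro j k
      rw [Algebra.smul_def, Algebra.smul_def]
      have : A ((B i).repr (v i) j) * B i j * (A ((Bstar i).repr (w i) k) * Bstar i k)
          = A ((B i).repr (v i) j) * (A ((Bstar i).repr (w i) k) * (B i j * Bstar i k)) := by
        ring
      rw [this, Tsm, Tsm]
      have hT : T (B i j * Bstar i k) = if j = k then 1 else 0 := hdual i j k
      rw [hT]; ring
    simp only [this]
    simp [mul_ite, mul_zero, Finset.sum_ite_eq, map_mul]
  have hinj : Function.Injective A := (algebraMap (ZMod 2) F).injective
  apply hinj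
  rw [map_zero, map_sum]
  simp only [key]
  rw [← map_sum, horth v hv w hw, map_zero]
end

section
/- With notation as above, the dual of the mapped code equals the mapped dual: D_𝓑(𝓛)^⊥ = D_{𝓑*}(𝓛^⊥) for any 𝔽_q-subspace 𝓛 ⊆ 𝔽_q^n, where ⊥ on the left is over 𝔽₂ and on the right is over 𝔽_q. -/
section aux

variable {F : Type*} [Field F] [Algebra (ZMod 2) F]

lemma zmod2_pow_two_pow (a : ZMod 2) (k : ℕ) : a ^ (2 ^ k) = a := by
  fin_cases a
  · exact zero_pow (by positivity)
  · exact one_pow _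

/-- The trace-like map as a `ZMod 2`-linear map. -/
noncomputable def traceLike (s : ℕ) : F →ₗ[ZMod 2] F where
  toFun c := ∑ m ∈ Finset.range s, c ^ (2 ^ m)
  map_add' x y := by
    haveI : Fact (Nat.Prime 2) := ⟨by norm_num⟩
    haveI : CharP F 2 :=
      charP_of_injective_ringHom (algebraMap (ZMod 2) F).injective 2
    simp_rw [add_pow_char_pow, Finset.sum_add_distrib]
  map_smul' a x := by
    simp only [RingHom.id_apply, Finset.smul_sum]
    refine Finset.sum_congr rfl fun m _ => ?_
    rw [Algebra.smul_def, mul_pow, ← map_pow, zmod2_pow_two_pow, Algebra.smul_def]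

end aux

/-- The dual of the mapped code equals the mapped dual: D_𝓑(𝓛)^⊥ = D_{𝓑*}(𝓛^⊥),
where D_𝓑, D_{𝓑*} : 𝔽_q^n → 𝔽₂^{ns} are the coordinate maps with respect to
𝔂₂-bases Bᵢ of 𝔽_q and their trace-dual bases. -/
theorem dual_of_mapped_code {F : Type*} [Field F] [Fintype F]
    [Algebra (ZMod 2) F] (s n : ℕ) (hs : Fintype.card F = 2 ^ s)
    (B Bstar : Fin n → Module.Basis (Fin s) (ZMod 2) F)
    (hdual : ∀ (i : Fin n) (j k : Fin s),
      (∑ m ∈ Finset.range s, (B i j * Bstar i k) ^ (2 ^ m)) = if j = k then 1 else 0)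
    (L : Submodule F (Fin n → F)) :
    {x : Fin n × Fin s → ZMod 2 | ∀ v ∈ L,
        (∑ p : Fin n × Fin s, x p * (B p.1).repr (v p.1) p.2) = 0} =
      (fun (w : Fin n → F) (p : Fin n × Fin s) => (Bstar p.1).repr (w p.1) p.2) ''
        {w : Fin n → F | ∀ v ∈ L, ∑ i : Fin n, v i * w i = 0} := by
  classical
  set T : F →ₗ[ZMod 2] F := traceLike s with hTdef
  have hTapply : ∀ c : F, T c = ∑ m ∈ Finset.range s, c ^ (2 ^ m) := fun c => rfl
  -- key trace identity
  have key : ∀ (i : Fin n) (a b : F),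
      T (a * b) = algebraMap (ZMod 2) F
        (∑ k : Fin s, (Bstar i).repr b k * (B i).repr a k) := by
    intro i a b
    conv_lhs => rw [← (B i).sum_repr a, ← (Bstar i).sum_repr b]
    rw [Finset.sum_mul_sum]
    rw [map_sum]
    have : ∀ j : Fin s, T (∑ k : Fin s,
        ((B i).repr a j • B i j) * ((Bstar i).repr b k • Bstar i k))
        = algebraMap (ZMod 2) F ((Bstar i).repr b j * (B i).repr a j) := by
      intro j
      rw [map_sum]
      have hterm : ∀ k : Fin s,
          T (((B i).repr a j • B i j) * ((Bstar i).repr b k • Bstar i k))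
          = ((B i).repr a j * (Bstar i).repr b k) • (if j = k then (1:F) else 0) := by
        intro k
        rw [smul_mul_smul_comm, map_smul]
        congr 1
        rw [hTapply]
        exact hdual i j k
      simp_rw [hterm]
      simp only [smul_ite, smul_zero, Finset.sum_ite_eq, Finset.mem_univ, if_true]
      rw [Algebra.smul_def, mul_one, mul_comm ((B i).repr a j)]
    rw [Finset.sum_congr rfl fun j _ => this j, ← map_sum]
  -- bridge between the two pairings
  have bridge : ∀ (v w : Fin n → F),
      algebraMap (ZMod 2) F (∑ p : Fin n × Fin s,
        (Bstar p.1).repr (w p.1) p.2 * (B p.1).repr (v p.1) p.2)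
      = T (∑ i : Fin n, v i * w i) := by
    intro v w
    rw [map_sum T, Fintype.sum_prod_type, map_sum]
    exact Finset.sum_congr rfl fun i _ => (key i (v i) (w i)).symm
  have hinj : Function.Injective (algebraMap (ZMod 2) F) := by
    haveI : Fact (Nat.Prime 2) := ⟨by norm_num⟩
    exact (algebraMap (ZMod 2) F).injective
  have hs1 : 0 < s := by
    by_contra h
    have : s = 0 := by omega
    have hcard := Fintype.one_lt_card (α := F)
    rw [hs, this] at hcard
    simp at hcard
  ext x
  simp only [Set.mem_setOf_eq, Set.mem_image]
  constructor
  · intro hx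
    refine ⟨fun i => ∑ k : Fin s, x (i, k) • Bstar i k, ?_, ?_⟩
    · -- membership in the dual code
      intro v hv
      set w : Fin n → F := fun i => ∑ k : Fin s, x (i, k) • Bstar i k with hw
      have hrep : ∀ i, ((Bstar i).repr (w i) : Fin s → ZMod 2) = fun k => x (i, k) :=
        fun i => (Bstar i).repr_sum_self _
      -- the bilinear condition in F, twisted by arbitrary scalar a
      have hTzero : ∀ a : F, T (a * ∑ i : Fin n, v i * w i) = 0 := by
        intro a
        have hmem : a • v ∈ L := L.smul_mem a hv
        have h0 := hx (a • v) hmem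
        have hb := bridge (a • v) w
        have hx' : (∑ p : Fin n × Fin s,
            (Bstar p.1).repr (w p.1) p.2 * (B p.1).repr ((a • v) p.1) p.2) = 0 := by
          rw [← h0]
          refine Finset.sum_congr rfl fun p _ => ?_
          rw [hrep p.1]
        rw [hx'] at hb
        rw [Finset.mul_sum]
        have : ∀ i : Fin n, a * (v i * w i) = (a • v) i * w i := by
          intro i; simp [mul_assoc]
        simp_rw [this]
        rw [← hb, map_zero]
      by_contra hc
      set c : F := ∑ i : Fin n, v i * w i with hcdef
      have hn : 0 < n := by
        by_contra hn0
        have : n = 0 := by omega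
        apply hc
        subst this
        simp [hcdef]
      set i0 : Fin n := ⟨0, hn⟩
      set k0 : Fin s := ⟨0, hs1⟩
      have ha := hTzero ((B i0 k0 * Bstar i0 k0) * c⁻¹)
      rw [mul_assoc, inv_mul_cancel₀ hc, mul_one] at ha
      rw [hTapply, hdual i0 k0 k0, if_pos rfl] at ha
      exact one_ne_zero ha
    · -- the image equals x
      funext p
      have hrep : ((Bstar p.1).repr (∑ k : Fin s, x (p.1, k) • Bstar p.1 k) :
          Fin s → ZMod 2) = fun k => x (p.1, k) := (Bstar p.1).repr_sum_self _
      calc ((Bstar p.1).repr (∑ k : Fin s, x (p.1, k) • Bstar p.1 k)) p.2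
          = x (p.1, p.2) := congrFun hrep p.2
        _ = x p := by rfl
  · rintro ⟨w, hw, rfl⟩
    intro v hv
    apply hinj
    rw [map_zero, bridge v w, hw v hv, map_zero]
end
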